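/- Let H be a symplectic Z-module of rank 2g with canonical element ω and standard embedding i : H → ∧³H, i(h) = h∧ω. If x and y are primitive vectors in H spanning a rank-2 direct summand of H with algebraic intersection number ⟨x,y⟩ equal to 0 or 1, then ∧³(⟨x,y⟩^⊥) ∩ i(H) = 0 inside ∧³H. -/

import Mathlib

open ExteriorAlgebra

set_option maxHeartbeats 1600000 in
/-- For a symplectic `ℤ`-module `H` of rank `2g` and primitive vectors
`x, y` spanning a rank-2 direct summand with `⟨x,y⟩ ∈ {0,1}`, the intersection of
`∧³(⟨x,y⟩^⊥)` with the image of the standard embedding `iH : h ↦ h ∧ ω` is zero. -/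
theorem johnson_linear_algebra_two_primitive (g : ℕ) (hg : 1 ≤ g)
    (H : Type) [AddCommGroup H] [Module ℤ H]
    (e : Module.Basis (Fin g ⊕ Fin g) ℤ H)
    (B : H →ₗ[ℤ] H →ₗ[ℤ] ℤ)
    (hBab : ∀ i j : Fin g, B (e (Sum.inl i)) (e (Sum.inr j)) = if i = j then 1 else 0)
    (hBaa : ∀ i j : Fin g, B (e (Sum.inl i)) (e (Sum.inl j)) = 0)
    (hBbb : ∀ i j : Fin g, B (e (Sum.inr i)) (e (Sum.inr j)) = 0)
    (hBalt : ∀ u : H, B u u = 0)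
    (x y : H)
    (hx : ∃ f : H →ₗ[ℤ] ℤ, f x = 1) (hy : ∃ f : H →ₗ[ℤ] ℤ, f y = 1)
    (hxy : B x y = 0 ∨ B x y = 1)
    (hli : LinearIndependent ℤ ![x, y])
    (hsummand : ∃ q : Submodule ℤ H, IsCompl (Submodule.span ℤ {x, y}) q)
    (ω : ExteriorAlgebra ℤ H)
    (hω : ω = ∑ i : Fin g, ι ℤ (e (Sum.inl i)) * ι ℤ (e (Sum.inr i)))
    (iH : H →ₗ[ℤ] ExteriorAlgebra ℤ H)
    (hiH : ∀ h : H, iH h = ι ℤ h * ω) :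
    (Submodule.span ℤ {z : ExteriorAlgebra ℤ H |
        ∃ u v w : H,
          B x u = 0 ∧ B y u = 0 ∧ B x v = 0 ∧ B y v = 0 ∧ B x w = 0 ∧ B y w = 0 ∧
          z = ι ℤ u * ι ℤ v * ι ℤ w}) ⊓ LinearMap.range iH
      = ⊥ := by
  classical
  -- skew symmetry
  have skew : ∀ u v : H, B u v = - B v u := by
    intro u v
    have h := hBalt (u + v)
    simp only [map_add, LinearMap.add_apply, hBalt u, hBalt v] at h
    linarith
  -- the contraction operator
  let F : Module.Dual ℤ H → ExteriorAlgebra ℤ H →ₗ[ℤ] ExteriorAlgebra ℤ H :=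
    fun d => CliffordAlgebra.contractLeft (Q := (0 : QuadraticForm ℤ H)) d
  have hFιmul : ∀ (d : Module.Dual ℤ H) (a : H) (b : ExteriorAlgebra ℤ H),
      F d (ι ℤ a * b) = d a • b - ι ℤ a * (F d b) := fun d a b =>
    CliffordAlgebra.contractLeft_ι_mul (Q := (0 : QuadraticForm ℤ H)) d a b
  have hFι : ∀ (d : Module.Dual ℤ H) (a : H),
      F d (ι ℤ a) = algebraMap ℤ _ (d a) := fun d a =>
    CliffordAlgebra.contractLeft_ι 0 d a
  have : @IsScalarTower ℤ ℤ H (Semiring.toModule (R := ℤ)).toSMul ‹Module ℤ H›.toSMul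
      ‹Module ℤ H›.toSMul := @IsScalarTower.left ℤ H _ ‹Module ℤ H›.toMulAction
  -- the auxiliary linear map L, equal to -id
  let L : H →ₗ[ℤ] H := ∑ i : Fin g,
      ((B.flip (e (Sum.inl i))).smulRight (e (Sum.inr i))
        - (B.flip (e (Sum.inr i))).smulRight (e (Sum.inl i)))
  have hLapply : ∀ u : H, L u =
      (∑ i : Fin g, B u (e (Sum.inl i)) • e (Sum.inr i))
        - ∑ i : Fin g, B u (e (Sum.inr i)) • e (Sum.inl i) := by
    intro u
    show (∑ i : Fin g,
      ((B.flip (e (Sum.inl i))).smulRight (e (Sum.inr i))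
        - (B.flip (e (Sum.inr i))).smulRight (e (Sum.inl i)))) u = _
    rw [LinearMap.sum_apply]
    simp only [LinearMap.sub_apply, LinearMap.smulRight_apply, LinearMap.flip_apply]
    rw [Finset.sum_sub_distrib]
    simp only [← Int.cast_smul_eq_zsmul ℤ, Int.cast_id]
  have hL : ∀ u : H, L u = -u := by
    have : L = -LinearMap.id := by
      apply e.ext
      rintro (j | j)
      · rw [hLapply]
        simp only [LinearMap.neg_apply, LinearMap.id_apply, hBaa, hBab, zero_smul,
          Finset.sum_const_zero, ite_smul, one_smul, one_zsmul, zero_smul, Finset.sum_ite_eq,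
          Finset.mem_univ, if_true, zero_sub, neg_neg]
      · rw [hLapply]
        have h1 : ∀ i : Fin g, B (e (Sum.inr j)) (e (Sum.inl i)) = if i = j then -1 else 0 := by
          intro i
          rw [skew, hBab]
          split <;> simp
        simp only [LinearMap.neg_apply, LinearMap.id_apply, hBbb, h1, zero_smul,
          Finset.sum_const_zero, ite_smul, zero_smul, Finset.sum_ite_eq',
          Finset.mem_univ, if_true, sub_zero, neg_smul, neg_one_zsmul, one_smul]
    intro u; rw [this]; rfl
  -- contraction of ω
  have hFω : ∀ u : H, F (B u) ω = -ι ℤ u := by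
    intro u
    rw [hω, map_sum]
    have step : ∀ i : Fin g, F (B u) (ι ℤ (e (Sum.inl i)) * ι ℤ (e (Sum.inr i)))
        = B u (e (Sum.inl i)) • ι ℤ (e (Sum.inr i))
          - B u (e (Sum.inr i)) • ι ℤ (e (Sum.inl i)) := by
      intro i
      rw [hFιmul, hFι, Algebra.algebraMap_eq_smul_one, mul_smul_comm, mul_one]; rfl
    rw [Finset.sum_congr rfl fun i _ => step i, Finset.sum_sub_distrib]
    have : ((∑ i : Fin g, B u (e (Sum.inl i)) • ι ℤ (e (Sum.inr i)))
        - ∑ i : Fin g, B u (e (Sum.inr i)) • ι ℤ (e (Sum.inl i))) = ι ℤ (L u) := by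
      rw [hLapply, map_sub, map_sum, map_sum]
      simp only [← Int.cast_smul_eq_zsmul ℤ, Int.cast_id, LinearMap.map_smul]; rfl
    rw [this, hL, map_neg]
  -- contraction kills the span
  have hkill : ∀ z ∈ Submodule.span ℤ {z : ExteriorAlgebra ℤ H |
      ∃ u v w : H,
        B x u = 0 ∧ B y u = 0 ∧ B x v = 0 ∧ B y v = 0 ∧ B x w = 0 ∧ B y w = 0 ∧
        z = ι ℤ u * ι ℤ v * ι ℤ w},
      F (B x) z = 0 ∧ F (B y) z = 0 := by
    intro z hz
    induction hz using Submodule.span_induction with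
    | mem z hz =>
      obtain ⟨u, v, w, hxu, hyu, hxv, hyv, hxw, hyw, rfl⟩ := hz
      constructor
      · rw [mul_assoc, hFιmul, hxu, hFιmul, hxv, hFι, hxw]
        simp
      · rw [mul_assoc, hFιmul, hyu, hFιmul, hyv, hFι, hyw]
        simp
    | zero => constructor <;> rw [map_zero]
    | add a b _ _ ha hb =>
      exact ⟨by rw [map_add, ha.1, hb.1, add_zero],
        by rw [map_add, ha.2, hb.2, add_zero]⟩
    | smul r a _ ha =>
      exact ⟨by rw [map_smul, ha.1, smul_zero], by rw [map_smul, ha.2, smul_zero]⟩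
  -- main argument
  rw [eq_bot_iff]
  rintro z ⟨hz1, h, rfl⟩
  simp only [Submodule.mem_bot]
  rw [hiH h] at hz1 ⊢
  obtain ⟨hzx, hzy⟩ := hkill _ hz1
  rw [hFιmul, hFω, mul_neg, sub_neg_eq_add] at hzx hzy
  have eq1 : B x h • ω + ι ℤ h * ι ℤ x = 0 := hzx
  have eq2 : B y h • ω + ι ℤ h * ι ℤ y = 0 := hzy
  -- transfer E-level identities to H via ιInv
  have hιInv : ∀ v : H, ιInv (ι ℤ v) = v := fun v => ι_leftInverse v
  have anticomm : ι ℤ y * ι ℤ x = -(ι ℤ x * ι ℤ y) :=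
    eq_neg_of_add_eq_zero_right (ι_add_mul_swap (R := ℤ) x y)
  -- apply F (B y) to eq1
  have h0 := congrArg (F (B y)) eq1
  rw [map_add, map_smul, hFω, hFιmul, hFι, Algebra.algebraMap_eq_smul_one,
    mul_smul_comm, mul_one, map_zero] at h0
  -- h0 : B x h • -ι ℤ y + (B y h • ι ℤ x - B y x • ι ℤ h) = 0
  rcases hxy with hd | hd
  · -- B x y = 0
    have hyx : B y x = 0 := by rw [skew, hd]; ring
    erw [hyx, zero_smul, sub_zero] at h0
    have hH := congrArg ιInv h0
    simp only [map_add, LinearMap.map_smul, map_zsmul, ← int_smul_eq_zsmul ‹Module ℤ H›, SMul.smul_eq_hSMul, map_neg, map_zero, hιInv] at hH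
    -- hH : B x h • -y + B y h • x = 0
    have hpair := LinearIndependent.pair_iff.mp hli (B y h) (-(B x h))
      (by linear_combination (norm := module) hH)
    have hα : B y h = 0 := hpair.1
    have hβ : B x h = 0 := by have := hpair.2; linarith
    rw [hβ, zero_smul, zero_add] at eq1
    rw [hα, zero_smul, zero_add] at eq2
    obtain ⟨f, hf⟩ := hx
    obtain ⟨f', hf'⟩ := hy
    have h1 := congrArg (F f) eq1
    rw [map_zero, hFιmul, hFι, hf, map_one, mul_one] at h1
    have h2 := congrArg ιInv h1
    simp only [map_sub, LinearMap.map_smul, map_zsmul, ← int_smul_eq_zsmul ‹Module ℤ H›, SMul.smul_eq_hSMul, map_zero, hιInv] at h2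
    -- h2 : f h • x - h = 0
    have h3 := congrArg ιInv (congrArg (F f') eq2)
    rw [map_zero, hFιmul, hFι, hf', map_one, mul_one] at h3
    simp only [map_sub, LinearMap.map_smul, map_zsmul, ← int_smul_eq_zsmul ‹Module ℤ H›, SMul.smul_eq_hSMul, map_zero, hιInv] at h3
    -- h3 : f' h • y - h = 0
    have hf0 : f h = 0 :=
      (LinearIndependent.pair_iff.mp hli (f h) (-(f' h))
        (by linear_combination (norm := module) h2 - h3)).1
    rw [hf0, zero_smul, zero_sub, neg_eq_zero] at h1
    have hzero : h = 0 := (ι_eq_zero_iff (R := ℤ) h).mp h1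
    rw [hzero, map_zero, zero_mul]
  · -- B x y = 1
    have hyx : B y x = -1 := by rw [skew, hd]
    rw [hyx] at h0
    have hιh : ι ℤ h = B x h • ι ℤ y - B y h • ι ℤ x := by
      linear_combination (norm := module) h0
    have key1 : ι ℤ y * (ι ℤ x * ι ℤ y) = 0 := by
      rw [← mul_assoc, anticomm, neg_mul, mul_assoc, ι_sq_zero, mul_zero, neg_zero]
    have key2 : ι ℤ x * (ι ℤ x * ι ℤ y) = 0 := by
      rw [← mul_assoc, ι_sq_zero, zero_mul]
    have e1 := eq_neg_of_add_eq_zero_left eq1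
    have e2 := eq_neg_of_add_eq_zero_left eq2
    rw [hιh, sub_mul, smul_mul_assoc, smul_mul_assoc,
      ← mul_smul_comm, ← mul_smul_comm, e1, e2, hιh]
    simp only [sub_mul, smul_mul_assoc, ι_sq_zero, smul_zero, sub_zero, zero_sub,
      anticomm, smul_neg, mul_neg, neg_neg, mul_smul_comm, key1, key2,
      neg_zero, sub_self]
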